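/- Consider a graph with maximum degree Δ and a vertex subset forming a block in which inner vertices (a designated nonempty set) induce a connected structure where every boundary vertex is adjacent to an inner vertex: if b is the number of boundary vertices and i ≥ 1 the number of inner vertices, then b ≤ (Δ−2)·i + 2. -/
import Mathlib


open Finset

/-- A pebbling move: remove two pebbles from `src`, add one to `tgt`. -/
structure PMove (V : Type*) where
  src : V
  tgt : V

/-- Result of applying one pebbling move to a distribution. -/
def applyMove {V : Type*} [DecidableEq V] (p : V → ℕ) (m : PMove V) : V → ℕ :=
  fun w => if w = m.src then p w - 2 else if w = m.tgt then p w + 1 else p w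

/-- A list of moves is executable: each move goes along an edge and has
two pebbles available at its source. -/
def Executable {V : Type*} [DecidableEq V] (G : SimpleGraph V) :
    (V → ℕ) → List (PMove V) → Prop
  | _, [] => True
  | p, m :: ms => G.Adj m.src m.tgt ∧ 2 ≤ p m.src ∧ Executable G (applyMove p m) ms

/-- The distribution obtained after applying a sequence of moves. -/
def applySeq {V : Type*} [DecidableEq V] (p : V → ℕ) (σ : List (PMove V)) : V → ℕ :=
  σ.foldl applyMove p

/-- `v` is `k`-reachable under `p`. -/
def KReachable {V : Type*} [DecidableEq V] (G : SimpleGraph V) (p : V → ℕ) (k : ℕ) (v : V) :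
    Prop :=
  ∃ σ : List (PMove V), Executable G p σ ∧ k ≤ applySeq p σ v

/-- `v` is reachable under `p`: some pebbling sequence puts a pebble on `v`. -/
def Reachable' {V : Type*} [DecidableEq V] (G : SimpleGraph V) (p : V → ℕ) (v : V) : Prop :=
  KReachable G p 1 v

/-- The maximal number of pebbles that can be moved to `v`. -/
noncomputable def reach {V : Type*} [DecidableEq V] (G : SimpleGraph V) (p : V → ℕ) (v : V) :
    ℕ :=
  sSup {k | KReachable G p k v}

/-- The excess of `v` under `p`. -/
noncomputable def exc {V : Type*} [DecidableEq V] (G : SimpleGraph V) (p : V → ℕ) (v : V) :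
    ℕ :=
  reach G p v - 1

/-- The total excess of `p`. -/
noncomputable def TE {V : Type*} [Fintype V] [DecidableEq V] (G : SimpleGraph V)
    (p : V → ℕ) : ℕ :=
  ∑ v, exc G p v

/-- `p` is solvable: every vertex is reachable. -/
def Solvable {V : Type*} [DecidableEq V] (G : SimpleGraph V) (p : V → ℕ) : Prop :=
  ∀ v, Reachable' G p v

/-- The number of vertices reachable under `p`. -/
noncomputable def cov {V : Type*} [DecidableEq V] (G : SimpleGraph V) (p : V → ℕ) : ℕ :=
  Set.ncard {v | Reachable' G p v}

/-- The number of cooperation vertices of the pair `(p, q)`. -/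
noncomputable def coop {V : Type*} [DecidableEq V] (G : SimpleGraph V) (p q : V → ℕ) : ℕ :=
  Set.ncard {v | Reachable' G (p + q) v ∧ ¬ Reachable' G p v ∧ ¬ Reachable' G q v}

/-- The number of double covered vertices of the pair `(p, q)`. -/
noncomputable def DC {V : Type*} [DecidableEq V] (G : SimpleGraph V) (p q : V → ℕ) : ℕ :=
  Set.ncard {v | Reachable' G p v ∧ Reachable' G q v}

/-- The cooperation excess between `p` and `q`. -/
noncomputable def CE {V : Type*} [Fintype V] [DecidableEq V] (G : SimpleGraph V)
    (p q : V → ℕ) : ℤ :=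
  (TE G (p + q) : ℤ) - TE G p - TE G q

/-- The effect of a pebble placed at `v`. -/
noncomputable def eff {V : Type*} (G : SimpleGraph V) (v : V) : ℚ :=
  ∑ i ∈ Finset.range (G.diam + 1), (1 / 2 : ℚ) ^ i * (Set.ncard {u | G.dist v u = i})

/-- The optimal pebbling number of `G`. -/
noncomputable def piOpt {V : Type*} [Fintype V] [DecidableEq V] (G : SimpleGraph V) : ℕ :=
  sInf {k | ∃ p : V → ℕ, Solvable G p ∧ ∑ v, p v = k}

theorem conn_card_le_edges {W : Type*} [Fintype W] [DecidableEq W] (H : SimpleGraph W)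
    [DecidableRel H.Adj] (hc : H.Connected) : Fintype.card W - 1 ≤ #H.edgeFinset := by
  classical
  obtain ⟨r⟩ := hc.nonempty
  have key : ∀ v : W, v ≠ r → ∃ w, H.Adj v w ∧ H.dist w r < H.dist v r := by
    intro v hv
    obtain ⟨p, hp⟩ := (hc.preconnected v r).exists_walk_length_eq_dist
    cases p with
    | nil => exact absurd rfl hv
    | cons h q =>
      refine ⟨_, h, ?_⟩
      have : H.dist _ r ≤ q.length := SimpleGraph.dist_le q
      simp [SimpleGraph.Walk.length_cons] at hp
      omega
  choose f hf1 hf2 using key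
  have := Finset.card_le_card_of_injOn (s := (univ : Finset W).erase r)
    (t := H.edgeFinset) (fun v => if h : v = r then s(r, r) else s(v, f v h)) ?_ ?_
  · simpa using this
  · intro v hv
    have hv' : v ≠ r := Finset.ne_of_mem_erase hv
    simp [hv', SimpleGraph.mem_edgeFinset, hf1 v hv']
  · intro v1 h1 v2 h2 heq
    have hv1 : v1 ≠ r := Finset.ne_of_mem_erase h1
    have hv2 : v2 ≠ r := Finset.ne_of_mem_erase h2
    simp only [dif_neg hv1, dif_neg hv2, Sym2.eq_iff] at heq
    rcases heq with ⟨h, -⟩ | ⟨ha, hb⟩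
    · exact h
    · exfalso
      have d1 := hf2 v1 hv1
      have d2 := hf2 v2 hv2
      have e1 : H.dist (f v1 hv1) r = H.dist v2 r := by rw [hb]
      have e2 : H.dist v1 r = H.dist (f v2 hv2) r := by rw [ha]
      omega

/-- If the inner vertex set `I` induces a connected subgraph and the
boundary is the set of outside vertices adjacent to `I`, then `b ≤ (Δ−2)·i + 2`. -/
theorem stmt11 {V : Type*} [Fintype V] [DecidableEq V] (G : SimpleGraph V)
    [DecidableRel G.Adj] (hΔ : 2 ≤ G.maxDegree)
    (I : Set V) (hne : I.Nonempty) (hconn : (G.induce I).Connected) :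
    Set.ncard {v | v ∉ I ∧ ∃ w ∈ I, G.Adj v w} ≤ (G.maxDegree - 2) * I.ncard + 2 := by
  classical
  set IF : Finset V := I.toFinset with hIF
  have hBfin : Fintype ↥{v | v ∉ I ∧ ∃ w ∈ I, G.Adj v w} := by infer_instance
  rw [Set.ncard_eq_toFinset_card', Set.ncard_eq_toFinset_card']
  set BF : Finset V := Set.toFinset {v | v ∉ I ∧ ∃ w ∈ I, G.Adj v w} with hBF
  -- Step 1: BF is covered by outer neighborhoods
  have hsub : BF ⊆ IF.biUnion (fun w => G.neighborFinset w \ IF) := by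
    intro v hv
    rw [hBF, Set.mem_toFinset] at hv
    obtain ⟨hvI, w, hwI, hadj⟩ := hv
    refine Finset.mem_biUnion.2 ⟨w, by simp [hIF, hwI], ?_⟩
    simp [hIF, hvI, hadj.symm]
  have h1 : #BF ≤ ∑ w ∈ IF, #(G.neighborFinset w \ IF) :=
    le_trans (Finset.card_le_card hsub) (Finset.card_biUnion_le)
  -- Step 2: split degrees
  have h2 : ∀ w, #(G.neighborFinset w \ IF) + #(G.neighborFinset w ∩ IF) = G.degree w := by
    intro w
    rw [Finset.card_sdiff_add_card_inter]
    rfl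
  -- The induced graph
  haveI : DecidableRel (G.induce I).Adj := fun a b => decidable_of_iff (G.Adj a b) (by simp)
  -- Step 3: inner degree sums
  have hdeg : ∀ x : ↥I, (G.induce I).degree x = #(G.neighborFinset x.val ∩ IF) := by
    intro x
    rw [SimpleGraph.degree]
    refine Finset.card_bij (fun y _ => (y : V)) ?_ ?_ ?_
    · intro y hy
      rw [SimpleGraph.mem_neighborFinset] at hy
      simp only [Finset.mem_inter, SimpleGraph.mem_neighborFinset]
      exact ⟨by simpa using hy, by simp [hIF]⟩
    · intro a _ b _ h; exact Subtype.ext h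
    · intro y hy
      simp only [Finset.mem_inter, SimpleGraph.mem_neighborFinset, hIF, Set.mem_toFinset] at hy
      exact ⟨⟨y, hy.2⟩, by simp [hy.1], rfl⟩
  have hsum : ∑ w ∈ IF, #(G.neighborFinset w ∩ IF) = ∑ x : ↥I, (G.induce I).degree x := by
    rw [Finset.sum_subtype (p := (· ∈ I)) IF (fun x => by simp [hIF])
      (fun w => #(G.neighborFinset w ∩ IF))]
    exact (Finset.sum_congr rfl (fun x _ => (hdeg x).symm))
  have htwice : ∑ x : ↥I, (G.induce I).degree x = 2 * #(G.induce I).edgeFinset :=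
    SimpleGraph.sum_degrees_eq_twice_card_edges _
  have hedges : Fintype.card ↥I - 1 ≤ #(G.induce I).edgeFinset :=
    conn_card_le_edges _ hconn
  have hcard : Fintype.card ↥I = #IF := (Set.toFinset_card I).symm
  have hi : 1 ≤ #IF := by
    obtain ⟨v, hv⟩ := hne
    exact Finset.card_pos.2 ⟨v, by simp [hIF, hv]⟩
  have hdegsum : ∑ w ∈ IF, G.degree w ≤ G.maxDegree * #IF := by
    calc ∑ w ∈ IF, G.degree w ≤ ∑ _w ∈ IF, G.maxDegree :=
          Finset.sum_le_sum (fun w _ => G.degree_le_maxDegree w)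
    _ = G.maxDegree * #IF := by rw [Finset.sum_const, smul_eq_mul, mul_comm]
  have hsplit : (∑ w ∈ IF, #(G.neighborFinset w \ IF)) + ∑ w ∈ IF, #(G.neighborFinset w ∩ IF)
      = ∑ w ∈ IF, G.degree w := by
    rw [← Finset.sum_add_distrib]
    exact Finset.sum_congr rfl (fun w _ => h2 w)
  have hmul : G.maxDegree * #IF = (G.maxDegree - 2) * #IF + 2 * #IF := by
    rw [← Nat.add_mul, Nat.sub_add_cancel hΔ]
  have hfinal : Set.toFinset I = IF := rfl
  rw [hfinal]
  set X := (G.maxDegree - 2) * #IF with hX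
  omega
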